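/- Let E be a directed graph and let M ∈ M_γ(E) be a maximal tail such that every loop in M̃ = (M, s^{-1}(M), r, s) has an exit into M. Suppose M satisfies neither of the following: (i) M contains a vertex which emits no edges into M; (ii) there is an infinite path (a_1, a_2, ...) with edges in M̃ such that s(a_i) ≠ s(a_j) for i ≠ j, all s(a_i) ∈ M, and each vertex s(a_i) emits only one edge into M. Then there exists an infinite path β = (b_1, b_2, ...) in M̃ such that for each k ∈ ℕ there exist an index m > k and an edge e with e ≠ b_m, s(e) = s(b_m), and r(e) ≥ s(b_j) for some j ∈ ℕ. -/

import Mathlib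

open Classical

variable {V : Type*} {E : Type*}

/-- Reflexive-transitive reachability along edges of a directed graph `(V, E, src, rng)`. -/
def Reach (src rng : E → V) : V → V → Prop :=
  Relation.ReflTransGen (fun a b => ∃ e, src e = a ∧ rng e = b)

/-- A loop in a directed graph: a nonempty list of edges, cyclically composable. -/
def IsLoop (src rng : E → V) (p : List E) : Prop :=
  p ≠ [] ∧ ∀ i : Fin p.length,
    rng (p.get i) = src (p.get ⟨((i : ℕ) + 1) % p.length, Nat.mod_lt _ i.pos⟩)

/-- A loop is vertex-simple if the sources of its edges are pairwise distinct. -/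
def VertexSimple (src : E → V) (p : List E) : Prop :=
  ∀ i j : Fin p.length, i ≠ j → src (p.get i) ≠ src (p.get j)

/-- A graph has isolated loops if any two loops passing through a common vertex
share the edge at that vertex. -/
def HasIsolatedLoops (src rng : E → V) : Prop :=
  ∀ p q : List E, IsLoop src rng p → IsLoop src rng q →
    ∀ (i : Fin p.length) (j : Fin q.length),
      src (p.get i) = src (q.get j) → p.get i = q.get j

/-- An infinite path: a sequence of composable edges. -/
def IsInfPath (src rng : E → V) (b : ℕ → E) : Prop :=
  ∀ i, rng (b i) = src (b (i + 1))

/-- Shift-tail equivalence of infinite paths. -/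
def ShiftTailEquiv (b c : ℕ → E) : Prop :=
  ∃ k m : ℕ, ∀ i : ℕ, b (k + i) = c (m + i)

/-- A maximal tail: nonempty, and satisfying (MT1), (MT2), (MT3). -/
def MaximalTail (src rng : E → V) (M : Set V) : Prop :=
  M.Nonempty ∧
  (∀ v w, w ∈ M → Reach src rng v w → v ∈ M) ∧
  (∀ v ∈ M, {e | src e = v}.Finite → {e | src e = v}.Nonempty →
    ∃ e, src e = v ∧ rng e ∈ M) ∧
  (∀ v ∈ M, ∀ w ∈ M, ∃ y ∈ M, Reach src rng v y ∧ Reach src rng w y)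

/-- A hereditary set of vertices. -/
def Hereditary (src rng : E → V) (X : Set V) : Prop :=
  ∀ e, src e ∈ X → rng e ∈ X

/-- A saturated set of vertices. -/
def Saturated (src rng : E → V) (X : Set V) : Prop :=
  ∀ v, {e | src e = v}.Finite → {e | src e = v}.Nonempty →
    (∀ e, src e = v → rng e ∈ X) → v ∈ X

/-- `LoopGE p q`: there is a path from a vertex of loop `p` to a vertex of loop `q`. -/
def LoopGE (src rng : E → V) (p q : List E) : Prop :=
  ∃ (i : Fin p.length) (j : Fin q.length),
    Reach src rng (src (p.get i)) (src (q.get j))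

namespace Stmt7Aux

variable (src rng : E → V)

/-- `PathFrom src rng v p w`: the list `p` is a path of edges from `v` to `w`. -/
def PathFrom : V → List E → V → Prop
  | v, [], w => v = w
  | v, e :: p, w => src e = v ∧ PathFrom (rng e) p w

theorem pathFrom_append {v x w : V} {p q : List E} (h1 : PathFrom src rng v p x)
    (h2 : PathFrom src rng x q w) : PathFrom src rng v (p ++ q) w := by
  induction p generalizing v with
  | nil => have hv : v = x := h1; subst hv; exact h2
  | cons e p ih => exact ⟨h1.1, ih h1.2⟩

theorem reach_pathFrom {v w : V} (h : Reach src rng v w) :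
    ∃ p, PathFrom src rng v p w := by
  induction h with
  | refl => exact ⟨[], rfl⟩
  | tail _ step ih =>
    obtain ⟨p, hp⟩ := ih
    obtain ⟨e, he1, he2⟩ := step
    exact ⟨p ++ [e], pathFrom_append src rng hp ⟨he1, he2⟩⟩

theorem pathFrom_reach {p : List E} : ∀ {v w : V}, PathFrom src rng v p w →
    Reach src rng v w := by
  induction p with
  | nil => intro v w h; have hv : v = w := h; exact hv ▸ Relation.ReflTransGen.refl
  | cons e p ih =>
    intro v w h
    exact Relation.ReflTransGen.head ⟨e, h.1, rfl⟩ (ih h.2)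

theorem pathFrom_mem_reach {p : List E} : ∀ {v w : V}, PathFrom src rng v p w →
    ∀ e ∈ p, Reach src rng (src e) w := by
  induction p with
  | nil => intro v w _ e he; simp at he
  | cons f p ih =>
    intro v w h e he
    rcases List.mem_cons.1 he with rfl | he
    · exact Relation.ReflTransGen.head ⟨e, rfl, rfl⟩ (pathFrom_reach src rng h.2)
    · exact ih h.2 e he

theorem pathFrom_chain {p : List E} : ∀ {v w : V}, PathFrom src rng v p w →
    ∀ i (h : i + 1 < p.length), rng (p[i]'(by omega)) = src (p[i+1]'h) := by
  induction p with
  | nil => intro v w _ i hi; simp at hi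
  | cons f p ih =>
    intro v w h i hi
    match i with
    | 0 =>
      cases p with
      | nil => simp at hi
      | cons g q => simpa using h.2.1.symm
    | Nat.succ i =>
      have := ih h.2 i (by simpa using hi)
      simpa using this

theorem pathFrom_head {p : List E} {v w : V} (hp : p ≠ []) (h : PathFrom src rng v p w) :
    src (p[0]'(List.length_pos_iff.2 hp)) = v := by
  cases p with
  | nil => exact absurd rfl hp
  | cons e p => exact h.1



theorem claim (M : Set V)
    (hexit : ∀ p : List {e : E // src e ∈ M},
      IsLoop (fun e => src e.1) (fun e => rng e.1) p →
      ∃ i : Fin p.length, ∃ e : E, e ≠ (p.get i).1 ∧ src e = src (p.get i).1 ∧ rng e ∈ M)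
    (hnoti : ∀ v ∈ M, ∃ e, src e = v ∧ rng e ∈ M)
    (hnotii : ¬ ∃ a : ℕ → E, IsInfPath src rng a ∧ (∀ i, src (a i) ∈ M) ∧
      (∀ i j, i ≠ j → src (a i) ≠ src (a j)) ∧
      (∀ i, ∀ e, src e = src (a i) → rng e ∈ M → e = a i)) :
    ∀ v ∈ M, ∃ u a e, Reach src rng v u ∧ a ≠ e ∧ src a = u ∧ src e = u ∧
      rng a ∈ M ∧ rng e ∈ M := by
  intro v hv
  by_contra hcon
  have uniq : ∀ u a e, Reach src rng v u → src a = u → src e = u →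
      rng a ∈ M → rng e ∈ M → a = e := by
    intro u a e h1 h2 h3 h4 h5
    by_contra hne
    exact hcon ⟨u, a, e, h1, hne, h2, h3, h4, h5⟩
  -- choice of outgoing edge into M
  let f : V → E := fun u => if h : ∃ e, src e = u ∧ rng e ∈ M then h.choose else (hnoti v hv).choose
  have hfspec : ∀ u ∈ M, src (f u) = u ∧ rng (f u) ∈ M := by
    intro u hu
    have h : ∃ e, src e = u ∧ rng e ∈ M := hnoti u hu
    simp only [f, dif_pos h]
    exact h.choose_spec
  let c : ℕ → E := fun n => Nat.rec (f v) (fun _ p => f (rng p)) n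
  have hc0 : c 0 = f v := rfl
  have hcs : ∀ n, c (n + 1) = f (rng (c n)) := fun n => rfl
  have hinv : ∀ n, src (c n) ∈ M ∧ rng (c n) ∈ M ∧ Reach src rng v (src (c n)) := by
    intro n
    induction n with
    | zero =>
      obtain ⟨h1, h2⟩ := hfspec v hv
      refine ⟨?_, h2, ?_⟩
      · rw [hc0, h1]; exact hv
      · rw [hc0, h1]
        exact Relation.ReflTransGen.refl
    | succ n ih =>
      obtain ⟨h1, h2⟩ := hfspec (rng (c n)) ih.2.1
      have hr : Reach src rng v (rng (c n)) :=
        Relation.ReflTransGen.tail ih.2.2 ⟨c n, rfl, rfl⟩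
      refine ⟨?_, h2, ?_⟩
      · rw [hcs, h1]; exact ih.2.1
      · rw [hcs, h1]; exact hr
  have hpath : IsInfPath src rng c := by
    intro n
    have := (hfspec (rng (c n)) (hinv n).2.1).1
    rw [hcs]; exact this.symm
  have hu : ∀ n e, src e = src (c n) → rng e ∈ M → e = c n := by
    intro n e h1 h2
    exact uniq (src (c n)) e (c n) (hinv n).2.2 h1 rfl h2 (hinv n).2.1
  have hnotinj : ¬ ∀ i j, i ≠ j → src (c i) ≠ src (c j) := by
    intro hinj
    exact hnotii ⟨c, hpath, fun i => (hinv i).1, hinj, hu⟩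
  push_neg at hnotinj
  obtain ⟨i, j, hij, hsrc⟩ := hnotinj
  have key : ∀ i j : ℕ, i < j → src (c i) = src (c j) → False := by
    clear hij hsrc
    intro i j hij hsrc
    set k := j - i with hk
    have hk0 : 0 < k := by omega
    set p : List {e : E // src e ∈ M} :=
      (List.range k).map (fun t => ⟨c (i + t), (hinv (i + t)).1⟩) with hp
    have hlen : p.length = k := by simp [hp]
    have hget : ∀ (t : Fin p.length), (p.get t).1 = c (i + (t : ℕ)) := by
      intro t
      simp [hp, List.get_eq_getElem]
    have hne : p ≠ [] := by
      intro h
      rw [h] at hlen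
      simp at hlen
      omega
    have hloop : IsLoop (fun e => src e.1) (fun e => rng e.1) p := by
      refine ⟨hne, ?_⟩
      intro t
      show rng (p.get t).1 = src (p.get ⟨((t : ℕ) + 1) % p.length, Nat.mod_lt _ t.pos⟩).1
      rw [hget t, hget ⟨((t : ℕ) + 1) % p.length, Nat.mod_lt _ t.pos⟩]
      show rng (c (i + (t : ℕ))) = src (c (i + ((t : ℕ) + 1) % p.length))
      have ht : (t : ℕ) < k := hlen ▸ t.2
      rcases Nat.lt_or_ge ((t : ℕ) + 1) k with hlt | hge
      · have hmod : ((t : ℕ) + 1) % p.length = (t : ℕ) + 1 :=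
          Nat.mod_eq_of_lt (by omega)
        rw [hmod, show i + ((t : ℕ) + 1) = (i + (t : ℕ)) + 1 from by omega]
        exact hpath (i + (t : ℕ))
      · have hmod : ((t : ℕ) + 1) % p.length = 0 := by
          rw [show (t : ℕ) + 1 = p.length from by omega, Nat.mod_self]
        rw [hmod]
        have h1 := hpath (i + (t : ℕ))
        rw [show i + (t : ℕ) + 1 = j from by omega] at h1
        rw [h1, Nat.add_zero]
        exact hsrc.symm
    obtain ⟨t, e, hene, hesrc, hemem⟩ := hexit p hloop
    have : e = c (i + (t : ℕ)) := hu (i + (t : ℕ)) e (by rw [hesrc, hget]) hemem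
    rw [← hget t] at this
    exact hene this
  rcases Nat.lt_or_ge i j with h | h
  · exact key i j h hsrc
  · exact key j i (by omega) hsrc.symm

theorem segment (M : Set V)
    (hMT3 : ∀ v ∈ M, ∀ w ∈ M, ∃ y ∈ M, Reach src rng v y ∧ Reach src rng w y)
    (hclaim : ∀ v ∈ M, ∃ u a e, Reach src rng v u ∧ a ≠ e ∧ src a = u ∧ src e = u ∧
      rng a ∈ M ∧ rng e ∈ M) :
    ∀ v ∈ M, ∃ s : List E × V, s.1 ≠ [] ∧ PathFrom src rng v s.1 s.2 ∧ s.2 ∈ M ∧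
      ∃ (m : ℕ) (hm : m < s.1.length) (e : E), e ≠ s.1[m] ∧ src e = src (s.1[m]) ∧
        Reach src rng (rng e) s.2 := by
  intro v hv
  obtain ⟨u, a, e, hr, hne, hsa, hse, hra, hre⟩ := hclaim v hv
  obtain ⟨y, hy, h1, h2⟩ := hMT3 (rng a) hra (rng e) hre
  obtain ⟨p1, hp1⟩ := reach_pathFrom src rng hr
  obtain ⟨p2, hp2⟩ := reach_pathFrom src rng h1
  have hgeta : ∀ h : p1.length < (p1 ++ a :: p2).length, (p1 ++ a :: p2)[p1.length]'h = a := by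
    intro h
    rw [List.getElem_append_right (le_refl _)]
    simp
  refine ⟨(p1 ++ a :: p2, y), by simp, ?_, hy, p1.length, by simp, e, ?_, ?_, h2⟩
  · exact pathFrom_append src rng hp1 ⟨hsa, hp2⟩
  · rw [hgeta]; exact hne.symm
  · rw [hgeta]; rw [hse, hsa]

end Stmt7Aux

/-- If `M ∈ 𝓜_γ(E)` (every loop in `M̃` has an exit into `M`) satisfies neither (i)
(a vertex of `M` emitting no edge into `M`) nor (ii) (an injective infinite path of
vertices of `M` each emitting only one edge into `M`), then there is an infinite
path `b` in `M̃` satisfying condition (†). -/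
theorem stmt_7 (src rng : E → V) (M : Set V) (hM : MaximalTail src rng M)
    (hexit : ∀ p : List {e : E // src e ∈ M},
      IsLoop (fun e => src e.1) (fun e => rng e.1) p →
      ∃ i : Fin p.length, ∃ e : E, e ≠ (p.get i).1 ∧ src e = src (p.get i).1 ∧ rng e ∈ M)
    (hnoti : ∀ v ∈ M, ∃ e, src e = v ∧ rng e ∈ M)
    (hnotii : ¬ ∃ a : ℕ → E, IsInfPath src rng a ∧ (∀ i, src (a i) ∈ M) ∧
      (∀ i j, i ≠ j → src (a i) ≠ src (a j)) ∧
      (∀ i, ∀ e, src e = src (a i) → rng e ∈ M → e = a i)) :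
    ∃ b : ℕ → E, IsInfPath src rng b ∧ (∀ i, src (b i) ∈ M) ∧
      ∀ k : ℕ, ∃ m > k, ∃ e : E, e ≠ b m ∧ src e = src (b m) ∧
        ∃ j : ℕ, Reach src rng (rng e) (src (b j)) := by
  obtain ⟨v0, hv0⟩ := hM.1
  have hMT1 := hM.2.1
  obtain ⟨e0, -, -⟩ := hnoti v0 hv0
  have hseg := Stmt7Aux.segment src rng M hM.2.2.2 (Stmt7Aux.claim src rng M hexit hnoti hnotii)
  let F : V → List E × V := fun v => if h : v ∈ M then (hseg v h).choose else ([], v)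
  have hF : ∀ v ∈ M, (F v).1 ≠ [] ∧ Stmt7Aux.PathFrom src rng v (F v).1 (F v).2 ∧ (F v).2 ∈ M ∧
      ∃ (m : ℕ) (hm : m < (F v).1.length) (e : E), e ≠ (F v).1[m] ∧
        src e = src ((F v).1[m]) ∧ Reach src rng (rng e) (F v).2 := by
    intro v hv
    simp only [F, dif_pos hv]
    exact (hseg v hv).choose_spec
  let P : ℕ → List E × V := fun n => Nat.rec ([], v0) (fun _ s => (s.1 ++ (F s.2).1, (F s.2).2)) n
  have hPs : ∀ n, P (n + 1) = ((P n).1 ++ (F (P n).2).1, (F (P n).2).2) := fun _ => rfl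
  have hInv : ∀ n, Stmt7Aux.PathFrom src rng v0 (P n).1 (P n).2 ∧ (P n).2 ∈ M ∧ n ≤ (P n).1.length := by
    intro n
    induction n with
    | zero => exact ⟨rfl, hv0, Nat.zero_le _⟩
    | succ n ih =>
      obtain ⟨h1, h2, h3⟩ := ih
      obtain ⟨hne, hpath, hmem, -⟩ := hF (P n).2 h2
      refine ⟨Stmt7Aux.pathFrom_append src rng h1 hpath, hmem, ?_⟩
      have hpos : 0 < (F (P n).2).1.length := List.length_pos_iff.2 hne
      rw [hPs]
      simp only [List.length_append]
      omega
  have hpre : ∀ n m, n ≤ m → (P n).1 <+: (P m).1 := by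
    intro n m h
    induction m, h using Nat.le_induction with
    | base => exact List.prefix_refl _
    | succ m hm ih =>
      refine ih.trans ?_
      rw [hPs]
      exact List.prefix_append _ _
  let b : ℕ → E := fun k => ((P (k + 1)).1).getD k e0
  have hblt : ∀ k, k < (P (k + 1)).1.length := fun k =>
    lt_of_lt_of_le (Nat.lt_succ_self k) (hInv (k + 1)).2.2
  have hb : ∀ k n (h : k < (P n).1.length), b k = (P n).1[k] := by
    intro k n h
    have h1 : b k = (P (k + 1)).1[k]'(hblt k) := List.getD_eq_getElem _ _ (hblt k)
    rcases le_total (k + 1) n with hle | hle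
    · rw [h1]; exact (hpre _ _ hle).getElem (hblt k)
    · rw [h1]; exact ((hpre _ _ hle).getElem h).symm
  have hbpath : IsInfPath src rng b := by
    intro i
    have h2 : i + 1 < (P (i + 2)).1.length := lt_of_lt_of_le (by omega) (hInv (i + 2)).2.2
    have h1 : i < (P (i + 2)).1.length := by omega
    rw [hb i (i + 2) h1, hb (i + 1) (i + 2) h2]
    exact Stmt7Aux.pathFrom_chain src rng (hInv (i + 2)).1 i h2
  have hbM : ∀ i, src (b i) ∈ M := by
    intro i
    rw [hb i (i + 1) (hblt i)]
    exact hMT1 _ _ (hInv (i + 1)).2.1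
      (Stmt7Aux.pathFrom_mem_reach src rng (hInv (i + 1)).1 _ (List.getElem_mem _))
  refine ⟨b, hbpath, hbM, ?_⟩
  intro k
  obtain ⟨-, -, -, m', hm', e, hene, hesrc, her⟩ := hF (P (k + 1)).2 (hInv (k + 1)).2.1
  have e1 : (P (k + 2)).1 = (P (k + 1)).1 ++ (F (P (k + 1)).2).1 := rfl
  have e1len : (P (k + 2)).1.length = (P (k + 1)).1.length + (F (P (k + 1)).2).1.length := by
    rw [e1]; exact List.length_append
  have hlt : (P (k + 1)).1.length + m' < (P (k + 2)).1.length := by omega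
  have hbm : b ((P (k + 1)).1.length + m') = (F (P (k + 1)).2).1[m']'hm' := by
    rw [hb _ (k + 2) hlt, List.getElem_of_eq e1 hlt,
      List.getElem_append_right (Nat.le_add_right _ _)]
    congr 1
    omega
  refine ⟨(P (k + 1)).1.length + m', ?_, e, ?_, ?_, (P (k + 2)).1.length, ?_⟩
  · have := (hInv (k + 1)).2.2; omega
  · rw [hbm]; exact hene
  · rw [hbm]; exact hesrc
  · obtain ⟨hne', hpath', -, -⟩ := hF (P (k + 2)).2 (hInv (k + 2)).2.1
    have h0 : 0 < (F (P (k + 2)).2).1.length := List.length_pos_iff.2 hne'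
    have e2 : (P (k + 3)).1 = (P (k + 2)).1 ++ (F (P (k + 2)).2).1 := rfl
    have e2len : (P (k + 3)).1.length = (P (k + 2)).1.length + (F (P (k + 2)).2).1.length := by
      rw [e2]; exact List.length_append
    have hj : (P (k + 2)).1.length < (P (k + 3)).1.length := by omega
    have hbj : src (b ((P (k + 2)).1.length)) = (P (k + 2)).2 := by
      rw [hb _ (k + 3) hj, List.getElem_of_eq e2 hj]
      rw [List.getElem_append_right (le_refl _)]
      have h00 : (F (P (k + 2)).2).1[(P (k + 2)).1.length - (P (k + 2)).1.length]'(by omega)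
          = (F (P (k + 2)).2).1[0]'h0 := by
        congr 1
        omega
      rw [h00]
      exact Stmt7Aux.pathFrom_head src rng hne' hpath'
    rw [hbj]
    exact her
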